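/- arXiv:1911.07993 — 3 statements merged into one kernel-verified Lean document; each statement's English description precedes it below -/
import Mathlib

section
/- Let $(X,\{f_n\}_{n=1}^{\infty})$ be a nonautonomous dynamical system on a compact metric space. For every $k \in \mathbb{N}_+$, the product system $(X^k, \{f_n^{(k)}\}_{n=1}^{\infty})$, where $f_n^{(k)} = f_n \times \cdots \times f_n$ ($k$ times) and $X^k$ carries the max metric, satisfies $h_{top}(X^k, \{f_n^{(k)}\}) = k \cdot h_{top}(X, \{f_n\})$. -/
open Filter MeasureTheory

noncomputable section

def compSeq {X : Type*} (f : ℕ → X → X) : ℕ → X → X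
  | 0 => id
  | n + 1 => f n ∘ compSeq f n

/-- `E` is an `(n, ε)`-separated set for the nonautonomous system `(X, f)`
with respect to the distance function `d`. -/
def IsSeparatedSet {X : Type*} (d : X → X → ℝ) (f : ℕ → X → X) (n : ℕ) (ε : ℝ)
    (E : Set X) : Prop :=
  ∀ x ∈ E, ∀ y ∈ E, x ≠ y → ∃ j < n, ε < d (compSeq f j x) (compSeq f j y)

/-- `F` is an `(n, ε)`-spanning set for the nonautonomous system `(X, f)`. -/
def IsSpanningSet {X : Type*} (d : X → X → ℝ) (f : ℕ → X → X) (n : ℕ) (ε : ℝ)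
    (F : Set X) : Prop :=
  ∀ x : X, ∃ y ∈ F, ∀ j < n, d (compSeq f j x) (compSeq f j y) < ε

/-- maximal cardinality of an `(n, ε)`-separated set. -/
def sepNum {X : Type*} (d : X → X → ℝ) (f : ℕ → X → X) (n : ℕ) (ε : ℝ) : ℕ :=
  sSup {c | ∃ E : Finset X, IsSeparatedSet d f n ε ↑E ∧ E.card = c}

/-- minimal cardinality of an `(n, ε)`-spanning set. -/
def spanNum {X : Type*} (d : X → X → ℝ) (f : ℕ → X → X) (n : ℕ) (ε : ℝ) : ℕ :=
  sInf {c | ∃ F : Finset X, IsSpanningSet d f n ε ↑F ∧ F.card = c}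

/-- Topological entropy of a nonautonomous dynamical system, via separated sets. -/
def nadsEntropy {X : Type*} (d : X → X → ℝ) (f : ℕ → X → X) : EReal :=
  ⨆ (ε : ℝ) (_ : 0 < ε),
    atTop.limsup fun n : ℕ => ((Real.log (sepNum d f n ε) / n : ℝ) : EReal)

end

noncomputable section Aux

namespace ProdEntropyAux

variable {Y : Type*} [MetricSpace Y]

lemma compSeq_continuous (g : ℕ → Y → Y) (hg : ∀ n, Continuous (g n)) :
    ∀ j, Continuous (compSeq g j)
  | 0 => continuous_id
  | j + 1 => (hg j).comp (compSeq_continuous g hg j)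

lemma sep_card_le_span (g : ℕ → Y → Y) {n : ℕ} {ε δ : ℝ} (h2 : 2 * δ ≤ ε)
    {E F : Finset Y} (hE : IsSeparatedSet (fun a b => dist a b) g n ε ↑E)
    (hF : IsSpanningSet (fun a b => dist a b) g n δ ↑F) : E.card ≤ F.card := by
  classical
  have hspec : ∀ x : Y, ∃ y, y ∈ F ∧ ∀ j < n, dist (compSeq g j x) (compSeq g j y) < δ := by
    intro x
    obtain ⟨y, hy, h⟩ := hF x
    exact ⟨y, hy, h⟩
  choose φ hφF hφd using hspec
  refine Finset.card_le_card_of_injOn φ (fun e _ => hφF e) ?_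
  intro e he e' he' hee
  by_contra hne
  obtain ⟨j, hj, hd⟩ := hE e (Finset.mem_coe.2 he) e' (Finset.mem_coe.2 he') hne
  have h1 : dist (compSeq g j e) (compSeq g j (φ e)) < δ := hφd e j hj
  have h2' : dist (compSeq g j e') (compSeq g j (φ e)) < δ := by
    rw [hee]; exact hφd e' j hj
  have htri := dist_triangle (compSeq g j e) (compSeq g j (φ e)) (compSeq g j e')
  rw [dist_comm (compSeq g j (φ e)) (compSeq g j e')] at htri
  simp only at hd
  linarith

variable [CompactSpace Y]

lemma exists_spanning (g : ℕ → Y → Y) (hg : ∀ n, Continuous (g n)) (n : ℕ) {ε : ℝ}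
    (hε : 0 < ε) :
    ∃ F : Finset Y, IsSpanningSet (fun a b => dist a b) g n ε ↑F := by
  set U : Y → Set Y := fun y => {x | ∀ j < n, dist (compSeq g j x) (compSeq g j y) < ε} with hU
  have hUopen : ∀ y : Y, IsOpen (U y) := by
    intro y
    have : U y = ⋂ j : Fin n, (compSeq g j.1) ⁻¹' Metric.ball (compSeq g j.1 y) ε := by
      ext x
      simp only [hU, Set.mem_iInter, Set.mem_preimage, Metric.mem_ball, Set.mem_setOf_eq]
      exact ⟨fun h j => h j.1 j.2, fun h j hj => h ⟨j, hj⟩⟩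
    rw [this]
    exact isOpen_iInter_of_finite fun j =>
      Metric.isOpen_ball.preimage (compSeq_continuous g hg j.1)
  obtain ⟨t, ht⟩ := isCompact_univ.elim_finite_subcover U hUopen
    (fun x _ => Set.mem_iUnion.2 ⟨x, fun j _ => by simpa [dist_self] using hε⟩)
  refine ⟨t, fun x => ?_⟩
  obtain ⟨y, hy, hx⟩ := Set.mem_iUnion₂.1 (ht (Set.mem_univ x))
  exact ⟨y, hy, hx⟩

lemma sepCards_zero_mem (g : ℕ → Y → Y) (n : ℕ) (ε : ℝ) :
    0 ∈ {c | ∃ E : Finset Y, IsSeparatedSet (fun a b => dist a b) g n ε ↑E ∧ E.card = c} := by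
  refine ⟨∅, fun x hx => ?_, Finset.card_empty⟩
  simp at hx

lemma sepCards_bddAbove (g : ℕ → Y → Y) (hg : ∀ n, Continuous (g n)) (n : ℕ) {ε : ℝ}
    (hε : 0 < ε) :
    BddAbove {c | ∃ E : Finset Y, IsSeparatedSet (fun a b => dist a b) g n ε ↑E ∧ E.card = c} := by
  obtain ⟨F, hF⟩ := exists_spanning g hg n (half_pos hε)
  refine ⟨F.card, ?_⟩
  rintro c ⟨E, hE, rfl⟩
  exact sep_card_le_span g (by linarith) hE hF

lemma exists_sepNum (g : ℕ → Y → Y) (hg : ∀ n, Continuous (g n)) (n : ℕ) {ε : ℝ}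
    (hε : 0 < ε) :
    ∃ E : Finset Y, IsSeparatedSet (fun a b => dist a b) g n ε ↑E ∧
      E.card = sepNum (fun a b => dist a b) g n ε :=
  Nat.sSup_mem ⟨0, sepCards_zero_mem g n ε⟩ (sepCards_bddAbove g hg n hε)

lemma card_le_sepNum (g : ℕ → Y → Y) (hg : ∀ n, Continuous (g n)) (n : ℕ) {ε : ℝ}
    (hε : 0 < ε) {E : Finset Y} (hE : IsSeparatedSet (fun a b => dist a b) g n ε ↑E) :
    E.card ≤ sepNum (fun a b => dist a b) g n ε :=
  le_csSup (sepCards_bddAbove g hg n hε) ⟨E, hE, rfl⟩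

lemma one_le_sepNum [Nonempty Y] (g : ℕ → Y → Y) (hg : ∀ n, Continuous (g n)) (n : ℕ)
    {ε : ℝ} (hε : 0 < ε) : 1 ≤ sepNum (fun a b => dist a b) g n ε := by
  obtain ⟨y⟩ := ‹Nonempty Y›
  have hsep : IsSeparatedSet (fun a b => dist a b) g n ε ↑({y} : Finset Y) := by
    intro a ha b hb hab
    simp only [Finset.coe_singleton, Set.mem_singleton_iff] at ha hb
    exact absurd (ha.trans hb.symm) hab
  simpa using card_le_sepNum g hg n hε hsep

lemma spanNum_le_card (g : ℕ → Y → Y) (n : ℕ) {ε : ℝ} {F : Finset Y}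
    (hF : IsSpanningSet (fun a b => dist a b) g n ε ↑F) :
    spanNum (fun a b => dist a b) g n ε ≤ F.card :=
  Nat.sInf_le ⟨F, hF, rfl⟩

lemma exists_spanNum (g : ℕ → Y → Y) (hg : ∀ n, Continuous (g n)) (n : ℕ) {ε : ℝ}
    (hε : 0 < ε) :
    ∃ F : Finset Y, IsSpanningSet (fun a b => dist a b) g n ε ↑F ∧
      F.card = spanNum (fun a b => dist a b) g n ε := by
  obtain ⟨F, hF⟩ := exists_spanning g hg n hε
  have hne : {c | ∃ F : Finset Y, IsSpanningSet (fun a b => dist a b) g n ε ↑F ∧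
      F.card = c}.Nonempty := ⟨F.card, F, hF, rfl⟩
  obtain ⟨F', hF', hc⟩ := Nat.sInf_mem hne
  exact ⟨F', hF', hc⟩

lemma sepNum_le_spanNum (g : ℕ → Y → Y) (hg : ∀ n, Continuous (g n)) (n : ℕ) {ε : ℝ}
    (hε : 0 < ε) :
    sepNum (fun a b => dist a b) g n ε ≤ spanNum (fun a b => dist a b) g n (ε / 2) := by
  obtain ⟨E, hE, hcard⟩ := exists_sepNum g hg n hε
  obtain ⟨F, hF, hcardF⟩ := exists_spanNum g hg n (half_pos hε)
  rw [← hcard, ← hcardF]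
  exact sep_card_le_span g (by linarith) hE hF

lemma spanNum_le_sepNum (g : ℕ → Y → Y) (hg : ∀ n, Continuous (g n)) (n : ℕ) {ε ε' : ℝ}
    (hε' : 0 < ε') (hlt : ε' < ε) :
    spanNum (fun a b => dist a b) g n ε ≤ sepNum (fun a b => dist a b) g n ε' := by
  classical
  obtain ⟨E, hE, hcard⟩ := exists_sepNum g hg n hε'
  have hspan : IsSpanningSet (fun a b => dist a b) g n ε ↑E := by
    intro x
    by_contra hc
    push_neg at hc
    have hxE : x ∉ E := by
      intro hx
      obtain ⟨j, hj, hd⟩ := hc x (Finset.mem_coe.2 hx)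
      simp only [dist_self] at hd
      linarith
    have hsep : IsSeparatedSet (fun a b => dist a b) g n ε' ↑(insert x E) := by
      intro a ha b hb hab
      simp only [Finset.coe_insert, Set.mem_insert_iff, Finset.mem_coe] at ha hb
      rcases ha with rfl | ha
      · rcases hb with rfl | hb
        · exact absurd rfl hab
        · obtain ⟨j, hj, hd⟩ := hc b (Finset.mem_coe.2 hb)
          exact ⟨j, hj, lt_of_lt_of_le hlt hd⟩
      · rcases hb with rfl | hb
        · obtain ⟨j, hj, hd⟩ := hc a (Finset.mem_coe.2 ha)
          refine ⟨j, hj, ?_⟩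
          show ε' < dist (compSeq g j a) (compSeq g j b)
          rw [dist_comm]
          exact lt_of_lt_of_le hlt hd
        · exact hE a (Finset.mem_coe.2 ha) b (Finset.mem_coe.2 hb) hab
    have := card_le_sepNum g hg n hε' hsep
    rw [Finset.card_insert_of_notMem hxE, hcard] at this
    omega
  calc spanNum (fun a b => dist a b) g n ε ≤ E.card := spanNum_le_card g n hspan
    _ = _ := hcard

lemma sepNum_of_isEmpty {Z : Type*} [MetricSpace Z] [IsEmpty Z] (g : ℕ → Z → Z) (n : ℕ)
    (ε : ℝ) : sepNum (fun a b : Z => dist a b) g n ε = 0 := by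
  have hset : {c | ∃ E : Finset Z, IsSeparatedSet (fun a b : Z => dist a b) g n ε ↑E ∧
      E.card = c} = {0} := by
    ext c
    simp only [Set.mem_setOf_eq, Set.mem_singleton_iff]
    constructor
    · rintro ⟨E, -, rfl⟩
      simp [Finset.eq_empty_of_isEmpty E]
    · rintro rfl
      exact ⟨∅, fun x hx => (IsEmpty.false x).elim, Finset.card_empty⟩
  rw [sepNum, hset, csSup_singleton]

lemma entropy_of_isEmpty {Z : Type*} [MetricSpace Z] [IsEmpty Z] (g : ℕ → Z → Z) :
    nadsEntropy (fun a b : Z => dist a b) g = 0 := by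
  have hzero : ∀ (ε : ℝ) (n : ℕ),
      ((Real.log (sepNum (fun a b : Z => dist a b) g n ε) / n : ℝ) : EReal) = (0 : EReal) := by
    intro ε n
    rw [sepNum_of_isEmpty]
    simp
  rw [nadsEntropy]
  apply le_antisymm
  · refine iSup₂_le fun ε hε => ?_
    simp only [hzero]
    simp [Filter.limsup_const]
  · refine le_trans ?_ (le_iSup₂ (1 : ℝ) one_pos)
    simp only [hzero]
    simp [Filter.limsup_const]

/-- Multiplication by a positive real constant as an order isomorphism of `EReal`. -/
def erealMulIso (c : ℝ) (hc : 0 < c) : EReal ≃o EReal where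
  toFun a := (c : EReal) * a
  invFun a := a / (c : EReal)
  left_inv a := by
    show ((c : EReal) * a) / (c : EReal) = a
    rw [← EReal.mul_div]
    exact EReal.mul_div_cancel (EReal.coe_ne_bot c) (EReal.coe_ne_top c)
      (by exact_mod_cast hc.ne')
  right_inv a :=
    EReal.mul_div_cancel (EReal.coe_ne_bot c) (EReal.coe_ne_top c) (by exact_mod_cast hc.ne')
  map_rel_iff' := by
    intro a b
    show (c : EReal) * a ≤ (c : EReal) * b ↔ a ≤ b
    have hpos : (0 : EReal) < (c : EReal) := by exact_mod_cast hc
    rw [EReal.mul_comm (c : EReal) a, ← EReal.le_div_iff_mul_le hpos (EReal.coe_ne_top c),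
      ← EReal.mul_div, EReal.mul_div_cancel (EReal.coe_ne_bot c) (EReal.coe_ne_top c)
        (by exact_mod_cast hc.ne')]

end ProdEntropyAux

end Aux

noncomputable section ProdLemmas

namespace ProdEntropyAux

variable {X : Type*} [MetricSpace X] [CompactSpace X] (f : ℕ → X → X) (k : ℕ)

lemma compSeq_pi : ∀ (j : ℕ) (x : Fin k → X) (i : Fin k),
    compSeq (fun n (x : Fin k → X) (i : Fin k) => f n (x i)) j x i = compSeq f j (x i)
  | 0, _, _ => rfl
  | j + 1, x, i => by
    show f j (compSeq (fun n (x : Fin k → X) (i : Fin k) => f n (x i)) j x i)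
        = f j (compSeq f j (x i))
    rw [compSeq_pi j x i]

lemma continuous_prodMap (hf : ∀ n, Continuous (f n)) (n : ℕ) :
    Continuous (fun (x : Fin k → X) (i : Fin k) => f n (x i)) :=
  continuous_pi fun i => (hf n).comp (continuous_apply i)

lemma sepNum_pow_le (hf : ∀ n, Continuous (f n)) (n : ℕ) {ε : ℝ} (hε : 0 < ε) :
    sepNum (fun x y : X => dist x y) f n ε ^ k ≤
      sepNum (fun x y : Fin k → X => dist x y) (fun n x i => f n (x i)) n ε := by
  classical
  obtain ⟨E, hE, hcard⟩ := exists_sepNum f hf n hε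
  have hsep : IsSeparatedSet (fun x y : Fin k → X => dist x y) (fun n x i => f n (x i)) n ε
      ↑(Fintype.piFinset fun _ : Fin k => E) := by
    intro x hx y hy hxy
    rw [Finset.mem_coe, Fintype.mem_piFinset] at hx hy
    obtain ⟨i, hi⟩ := Function.ne_iff.1 hxy
    obtain ⟨j, hj, hd⟩ := hE (x i) (hx i) (y i) (hy i) hi
    refine ⟨j, hj, lt_of_lt_of_le hd ?_⟩
    have hle := dist_le_pi_dist (compSeq (fun n (x : Fin k → X) (i : Fin k) => f n (x i)) j x)
      (compSeq (fun n (x : Fin k → X) (i : Fin k) => f n (x i)) j y) i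
    rwa [compSeq_pi f k j x i, compSeq_pi f k j y i] at hle
  calc sepNum (fun x y : X => dist x y) f n ε ^ k
      = (Fintype.piFinset fun _ : Fin k => E).card := by
        rw [Fintype.card_piFinset_const, hcard]
    _ ≤ _ := card_le_sepNum _ (continuous_prodMap f k hf) n hε hsep

lemma spanNum_pow_le (hf : ∀ n, Continuous (f n)) (n : ℕ) {ε : ℝ} (hε : 0 < ε) :
    spanNum (fun x y : Fin k → X => dist x y) (fun n x i => f n (x i)) n ε ≤
      spanNum (fun x y : X => dist x y) f n ε ^ k := by
  classical
  obtain ⟨F₀, hF₀, hcard⟩ := exists_spanNum f hf n hε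
  have hspan : IsSpanningSet (fun x y : Fin k → X => dist x y) (fun n x i => f n (x i)) n ε
      ↑(Fintype.piFinset fun _ : Fin k => F₀) := by
    intro x
    choose y hy1 hy2 using fun i => hF₀ (x i)
    refine ⟨fun i => y i, ?_, ?_⟩
    · rw [Finset.mem_coe, Fintype.mem_piFinset]
      exact fun i => hy1 i
    · intro j hj
      rw [dist_pi_lt_iff hε]
      intro i
      rw [compSeq_pi f k j x i, compSeq_pi f k j (fun i => y i) i]
      exact hy2 i j hj
  calc spanNum (fun x y : Fin k → X => dist x y) (fun n x i => f n (x i)) n ε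
      ≤ (Fintype.piFinset fun _ : Fin k => F₀).card := spanNum_le_card _ n hspan
    _ = _ := by rw [Fintype.card_piFinset_const, hcard]

end ProdEntropyAux

end ProdLemmas

open ProdEntropyAux

theorem product_entropy {X : Type*} [MetricSpace X] [CompactSpace X]
    (f : ℕ → X → X) (hf : ∀ n, Continuous (f n)) (k : ℕ) (hk : 0 < k) :
    nadsEntropy (fun x y : Fin k → X => dist x y) (fun n x i => f n (x i)) =
      ((k : ℝ) : EReal) * nadsEntropy (fun x y : X => dist x y) f := by
  rcases isEmpty_or_nonempty X with hX | hX
  · haveI : IsEmpty (Fin k → X) := ⟨fun x => IsEmpty.false (x ⟨0, hk⟩)⟩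
    rw [entropy_of_isEmpty, entropy_of_isEmpty, mul_zero]
  · haveI : Nonempty (Fin k → X) := ⟨fun _ => Classical.arbitrary X⟩
    have hkR : (0 : ℝ) < (k : ℝ) := by exact_mod_cast hk
    have hF : ∀ n, Continuous (fun (x : Fin k → X) (i : Fin k) => f n (x i)) :=
      continuous_prodMap f k hf
    set iso := erealMulIso (k : ℝ) hkR with hiso
    -- rewrite RHS
    have hRHS : ((k : ℝ) : EReal) * nadsEntropy (fun x y : X => dist x y) f =
        ⨆ (ε : ℝ) (_ : 0 < ε), atTop.limsup fun n : ℕ =>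
          (((k : ℝ) * (Real.log (sepNum (fun x y : X => dist x y) f n ε) / n) : ℝ) : EReal) := by
      have h1 : ((k : ℝ) : EReal) * nadsEntropy (fun x y : X => dist x y) f
          = iso (nadsEntropy (fun x y : X => dist x y) f) := rfl
      rw [h1, nadsEntropy, OrderIso.map_iSup]
      refine iSup_congr fun ε => ?_
      rw [OrderIso.map_iSup]
      refine iSup_congr fun hε => ?_
      have hlim := iso.limsup_apply (f := atTop)
        (u := fun n : ℕ => ((Real.log (sepNum (fun x y : X => dist x y) f n ε) / n : ℝ) : EReal))
      rw [hlim]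
      congr 1
    rw [hRHS, nadsEntropy]
    -- pointwise bounds
    have key_lower : ∀ {ε : ℝ}, 0 < ε → ∀ n : ℕ,
        (k : ℝ) * (Real.log (sepNum (fun x y : X => dist x y) f n ε) / n) ≤
          Real.log (sepNum (fun x y : Fin k → X => dist x y) (fun n x i => f n (x i)) n ε) / n := by
      intro ε hε n
      have h1 : 1 ≤ sepNum (fun x y : X => dist x y) f n ε := one_le_sepNum f hf n hε
      have hpow := sepNum_pow_le f k hf n hε
      have hlog : (k : ℝ) * Real.log (sepNum (fun x y : X => dist x y) f n ε) ≤
          Real.log (sepNum (fun x y : Fin k → X => dist x y) (fun n x i => f n (x i)) n ε) := by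
        rw [← Real.log_pow]
        apply Real.log_le_log (by positivity)
        exact_mod_cast hpow
      rcases Nat.eq_zero_or_pos n with rfl | hn
      · simp
      · have hn' : (0 : ℝ) < n := by exact_mod_cast hn
        rw [← mul_div_assoc, div_le_div_iff_of_pos_right hn']
        exact hlog
    have key_upper : ∀ {ε : ℝ}, 0 < ε → ∀ n : ℕ,
        Real.log (sepNum (fun x y : Fin k → X => dist x y) (fun n x i => f n (x i)) n ε) / n ≤
          (k : ℝ) * (Real.log (sepNum (fun x y : X => dist x y) f n (ε / 4)) / n) := by
      intro ε hε n
      have h1 : 1 ≤ sepNum (fun x y : Fin k → X => dist x y) (fun n x i => f n (x i)) n ε :=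
        one_le_sepNum _ hF n hε
      have hchain : sepNum (fun x y : Fin k → X => dist x y) (fun n x i => f n (x i)) n ε ≤
          sepNum (fun x y : X => dist x y) f n (ε / 4) ^ k := by
        calc sepNum (fun x y : Fin k → X => dist x y) (fun n x i => f n (x i)) n ε
            ≤ spanNum (fun x y : Fin k → X => dist x y) (fun n x i => f n (x i)) n (ε / 2) :=
              sepNum_le_spanNum _ hF n hε
          _ ≤ spanNum (fun x y : X => dist x y) f n (ε / 2) ^ k :=
              spanNum_pow_le f k hf n (half_pos hε)
          _ ≤ sepNum (fun x y : X => dist x y) f n (ε / 4) ^ k := by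
              apply Nat.pow_le_pow_left
              exact spanNum_le_sepNum f hf n (by linarith) (by linarith)
      have hlog : Real.log (sepNum (fun x y : Fin k → X => dist x y)
            (fun n x i => f n (x i)) n ε) ≤
          (k : ℝ) * Real.log (sepNum (fun x y : X => dist x y) f n (ε / 4)) := by
        rw [← Real.log_pow]
        apply Real.log_le_log (by exact_mod_cast h1)
        exact_mod_cast hchain
      rcases Nat.eq_zero_or_pos n with rfl | hn
      · simp
      · have hn' : (0 : ℝ) < n := by exact_mod_cast hn
        rw [← mul_div_assoc, div_le_div_iff_of_pos_right hn']
        exact hlog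
    apply le_antisymm
    · refine iSup₂_le fun ε hε => ?_
      refine le_trans ?_ (le_iSup₂_of_le (ε / 4) (by linarith) le_rfl)
      exact Filter.limsup_le_limsup
        (Eventually.of_forall fun n => EReal.coe_le_coe_iff.2 (key_upper hε n))
    · refine iSup₂_le fun ε hε => ?_
      refine le_trans ?_ (le_iSup₂_of_le ε hε le_rfl)
      exact Filter.limsup_le_limsup
        (Eventually.of_forall fun n => EReal.coe_le_coe_iff.2 (key_lower hε n))
end

section
/- There exist two nonautonomous dynamical systems $(X,\{f_n\})$ and $(Y,\{g_n\})$ and a finite-to-one extension $\pi : X \to Y$ (continuous surjection with $\pi \circ f_n = g_n \circ \pi$ for all $n$ and $\sup_{y \in Y} \#\pi^{-1}(y) \le 2$) such that $h_{top}(X, \{f_n\}) > h_{top}(Y, \{g_n\})$. -/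
open Filter MeasureTheory

/-- A nonautonomous dynamical system: a compact metric space together with a
sequence of continuous self-maps. -/
structure NADS where
  (carrier : Type)
  [met : MetricSpace carrier]
  [cpt : CompactSpace carrier]
  (maps : ℕ → carrier → carrier)
  (cont : ∀ n, Continuous (maps n))

attribute [instance] NADS.met NADS.cpt

namespace NotPres

abbrev C := ℕ → Bool

noncomputable instance : DecidableEq C := Classical.decEq _

noncomputable instance : MetricSpace C := PiNat.metricSpace

example : CompactSpace C := inferInstance

lemma dist_gt_half_iff {x y : C} : (1/2 : ℝ) < dist x y ↔ x 0 ≠ y 0 := by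
  constructor
  · intro h
    intro h0
    rcases eq_or_ne x y with rfl | hne
    · simp at h; linarith
    · have hfd : x (PiNat.firstDiff x y) ≠ y (PiNat.firstDiff x y) :=
        PiNat.apply_firstDiff_ne hne
      have h1 : 1 ≤ PiNat.firstDiff x y := by
        rcases Nat.eq_zero_or_pos (PiNat.firstDiff x y) with h' | h'
        · rw [h'] at hfd; exact absurd h0 hfd
        · exact h'
      have : dist x y ≤ (1/2 : ℝ) ^ 1 := by
        rw [PiNat.dist_eq_of_ne hne]
        exact pow_le_pow_of_le_one (by norm_num) (by norm_num) h1
      simp at this; linarith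
  · intro h
    have hne : x ≠ y := fun he => h (congrFun he 0)
    have hfd : PiNat.firstDiff x y = 0 := by
      by_contra h'
      exact h (PiNat.apply_eq_of_lt_firstDiff (Nat.pos_of_ne_zero h'))
    rw [PiNat.dist_eq_of_ne hne, hfd]
    norm_num

/-- The maps on `X`: update coordinate 0 to the value of coordinate `n+1`. -/
def fX : ℕ → C → C := fun n x i => if i = 0 then x (n + 1) else x i

lemma fX_cont (n : ℕ) : Continuous (fX n) := by
  apply continuous_pi
  intro i
  by_cases h : i = 0 <;> simp only [fX, h, if_true, if_false] <;> exact continuous_apply _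

lemma compSeq_fX (j : ℕ) (x : C) :
    compSeq fX j x = fun i => if i = 0 then x j else x i := by
  induction j with
  | zero =>
    funext i
    by_cases h : i = 0 <;> simp [compSeq, h]
  | succ j ih =>
    funext i
    show fX j (compSeq fX j x) i = _
    rw [ih]
    by_cases h : i = 0 <;> simp [fX, h]

def gY : ℕ → C → C := fun _ => id

lemma compSeq_gY (j : ℕ) : compSeq gY j = id := by
  induction j with
  | zero => rfl
  | succ j ih => show gY j ∘ compSeq gY j = id; rw [ih]; rfl

/-- separation at time `j` for the `X` system means coordinate `j` differs. -/
lemma sep_iff (j : ℕ) (x y : C) :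
    (1/2 : ℝ) < dist (compSeq fX j x) (compSeq fX j y) ↔ x j ≠ y j := by
  rw [compSeq_fX, compSeq_fX, dist_gt_half_iff]
  simp

def emb (n : ℕ) : (Fin n → Bool) → C := fun v i => if h : i < n then v ⟨i, h⟩ else false

lemma emb_inj (n : ℕ) : Function.Injective (emb n) := by
  intro v w h
  funext j
  have := congrFun h j.val
  simpa [emb, j.isLt] using this

lemma sepNum_X (n : ℕ) :
    sepNum (fun x y : C => dist x y) fX n (1/2) = 2 ^ n := by
  have hbound : ∀ c ∈ {c | ∃ E : Finset C,
      IsSeparatedSet (fun x y : C => dist x y) fX n (1/2) ↑E ∧ E.card = c}, c ≤ 2 ^ n := by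
    rintro c ⟨E, hE, rfl⟩
    have hinj : Set.InjOn (fun x : C => (fun k : Fin n => x k.val)) ↑E := by
      intro x hx y hy hxy
      by_contra hne
      obtain ⟨j, hj, hd⟩ := hE x hx y hy hne
      have : x j ≠ y j := (sep_iff j x y).1 hd
      exact this (congrFun hxy ⟨j, hj⟩)
    calc E.card ≤ (Finset.univ : Finset (Fin n → Bool)).card :=
          Finset.card_le_card_of_injOn _ (fun _ _ => Finset.mem_univ _) hinj
      _ = 2 ^ n := by simp
  apply le_antisymm
  · exact csSup_le ⟨0, ⟨∅, by intro x hx; simp at hx, rfl⟩⟩ hbound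
  · apply le_csSup ⟨2 ^ n, hbound⟩
    refine ⟨Finset.univ.image (emb n), ?_, ?_⟩
    · intro x hx y hy hxy
      simp only [Finset.coe_image, Set.mem_image] at hx hy
      obtain ⟨v, -, rfl⟩ := hx
      obtain ⟨w, -, rfl⟩ := hy
      have hvw : v ≠ w := fun h => hxy (by rw [h])
      obtain ⟨j, hj⟩ := Function.ne_iff.1 hvw
      refine ⟨j.val, j.isLt, (sep_iff j.val (emb n v) (emb n w)).2 ?_⟩
      simpa [emb, j.isLt] using hj
    · rw [Finset.card_image_of_injective _ (emb_inj n)]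
      simp

lemma sepNum_Y_le (ε : ℝ) (hε : 0 < ε) :
    ∃ N : ℕ, ∀ n, sepNum (fun x y : C => dist x y) gY n ε ≤ N := by
  obtain ⟨t, hcov⟩ :=
    (isCompact_univ : IsCompact (Set.univ : Set C)).elim_finite_subcover
      (fun c : C => Metric.ball c (ε/2)) (fun _ => Metric.isOpen_ball)
      (fun x _ => Set.mem_iUnion.2 ⟨x, Metric.mem_ball_self (half_pos hε)⟩)
  have hsel : ∀ x : C, ∃ c ∈ t, x ∈ Metric.ball c (ε/2) := by
    intro x
    have := hcov (Set.mem_univ x)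
    simpa using this
  choose ctr hctr hball using hsel
  refine ⟨t.card, fun n => ?_⟩
  have h0 : (0 : ℕ) ∈ {c | ∃ E : Finset C,
      IsSeparatedSet (fun x y : C => dist x y) gY n ε ↑E ∧ E.card = c} :=
    ⟨∅, by intro x hx; simp at hx, rfl⟩
  apply csSup_le ⟨0, h0⟩
  rintro c ⟨E, hE, rfl⟩
  apply Finset.card_le_card_of_injOn ctr (fun x _ => hctr x)
  intro x hx y hy hxy
  by_contra hne
  obtain ⟨j, hj, hd⟩ := hE x hx y hy hne
  rw [compSeq_gY] at hd
  simp only [id] at hd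
  have h1 : dist x (ctr x) < ε/2 := Metric.mem_ball.1 (hball x)
  have h2 : dist y (ctr y) < ε/2 := Metric.mem_ball.1 (hball y)
  rw [← hxy] at h2
  have : dist x y ≤ dist x (ctr x) + dist (ctr x) y := dist_triangle _ _ _
  rw [dist_comm (ctr x) y] at this
  linarith



lemma entropyX_ge : (Real.log 2 : EReal) ≤ nadsEntropy (fun x y : C => dist x y) fX := by
  have hev : ∀ᶠ n : ℕ in atTop,
      ((Real.log (sepNum (fun x y : C => dist x y) fX n (1/2)) / n : ℝ) : EReal)
        = ((Real.log 2 : ℝ) : EReal) := by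
    filter_upwards [eventually_ge_atTop 1] with n hn
    rw [sepNum_X]
    have hn0 : (n : ℝ) ≠ 0 := Nat.cast_ne_zero.2 (by omega)
    push_cast
    rw [Real.log_pow]
    rw [mul_comm, mul_div_assoc, div_self hn0, mul_one]
  have hlim : atTop.limsup (fun n : ℕ =>
      ((Real.log (sepNum (fun x y : C => dist x y) fX n (1/2)) / n : ℝ) : EReal))
        = ((Real.log 2 : ℝ) : EReal) := by
    rw [limsup_congr hev, limsup_const]
  exact le_iSup_of_le (1/2 : ℝ) (le_iSup_of_le (by norm_num) hlim.ge)

lemma entropyY_le : nadsEntropy (fun x y : C => dist x y) gY ≤ 0 := by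
  refine iSup_le fun ε => iSup_le fun hε => ?_
  obtain ⟨N, hN⟩ := sepNum_Y_le ε hε
  set L := Real.log (N + 1) with hL
  have hterm : ∀ n : ℕ,
      ((Real.log (sepNum (fun x y : C => dist x y) gY n ε) / n : ℝ) : EReal)
        ≤ ((L / n : ℝ) : EReal) := by
    intro n
    apply EReal.coe_le_coe_iff.2
    have hlog : Real.log (sepNum (fun x y : C => dist x y) gY n ε) ≤ L := by
      rcases Nat.eq_zero_or_pos (sepNum (fun x y : C => dist x y) gY n ε) with h | h
      · rw [h]
        simp only [Nat.cast_zero, Real.log_zero, hL]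
        refine Real.log_nonneg ?_
        have : (0:ℝ) ≤ (N:ℝ) := Nat.cast_nonneg N
        linarith
      · apply Real.log_le_log (by exact_mod_cast h)
        have h2 : ((sepNum (fun x y : C => dist x y) gY n ε : ℕ) : ℝ) ≤ (N : ℝ) :=
          Nat.cast_le.2 (hN n)
        linarith
    rcases Nat.eq_zero_or_pos n with rfl | hn
    · simp
    · exact div_le_div_of_nonneg_right hlog (Nat.cast_nonneg n) |>.trans_eq rfl
  have h2 : Tendsto (fun n : ℕ => ((L / n : ℝ) : EReal)) atTop (nhds (0 : EReal)) := by
    rw [show (0 : EReal) = ((0 : ℝ) : EReal) by simp]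
    exact (EReal.tendsto_coe).2 (tendsto_const_div_atTop_nhds_zero_nat L)
  calc atTop.limsup (fun n : ℕ =>
        ((Real.log (sepNum (fun x y : C => dist x y) gY n ε) / n : ℝ) : EReal))
      ≤ atTop.limsup (fun n : ℕ => ((L / n : ℝ) : EReal)) :=
        limsup_le_limsup (Eventually.of_forall hterm)
    _ = 0 := h2.limsup_eq

end NotPres

namespace NotPres

/-- prepend a bit to a sequence -/
def cons (b : Bool) (y : C) : C := fun i => match i with
  | 0 => b
  | i + 1 => y i

/-- the factor map: forget coordinate 0 -/
def proj : C → C := fun x i => x (i + 1)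

lemma proj_cont : Continuous proj :=
  continuous_pi fun i => continuous_apply (i + 1)

lemma proj_surj : Function.Surjective proj := by
  intro y
  exact ⟨cons false y, rfl⟩

lemma proj_comm (n : ℕ) : proj ∘ fX n = gY n ∘ proj := by
  funext x i
  simp [proj, fX, gY]

lemma fiber_le (y : C) : Set.ncard (proj ⁻¹' {y}) ≤ 2 := by
  have hsub : proj ⁻¹' {y} ⊆ {cons false y, cons true y} := by
    intro x hx
    have hx' : proj x = y := hx
    have hx2 : x = cons (x 0) y := by
      funext i
      cases i with
      | zero => rfl
      | succ i => exact congrFun hx' i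
    cases h : x 0 <;> rw [hx2, h] <;> simp
  calc Set.ncard (proj ⁻¹' {y}) ≤ Set.ncard {cons false y, cons true y} :=
        Set.ncard_le_ncard hsub (Set.toFinite _)
    _ ≤ 2 := (Set.ncard_insert_le _ _).trans (by simp)

end NotPres

theorem finite_to_one_not_preserving :
    ∃ (S T : NADS) (π : S.carrier → T.carrier),
      Continuous π ∧ Function.Surjective π ∧
      (∀ n, π ∘ S.maps n = T.maps n ∘ π) ∧
      (∀ y : T.carrier, Set.ncard (π ⁻¹' {y}) ≤ 2) ∧
      nadsEntropy (fun x y : T.carrier => dist x y) T.maps <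
        nadsEntropy (fun x y : S.carrier => dist x y) S.maps := by
  refine ⟨⟨NotPres.C, NotPres.fX, NotPres.fX_cont⟩,
    ⟨NotPres.C, NotPres.gY, fun _ => continuous_id⟩, NotPres.proj,
    NotPres.proj_cont, NotPres.proj_surj, NotPres.proj_comm, NotPres.fiber_le, ?_⟩
  calc nadsEntropy (fun x y : NotPres.C => dist x y) NotPres.gY ≤ 0 := NotPres.entropyY_le
    _ < ((Real.log 2 : ℝ) : EReal) := by exact_mod_cast Real.log_pos one_lt_two
    _ ≤ nadsEntropy (fun x y : NotPres.C => dist x y) NotPres.fX := NotPres.entropyX_ge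
end

section
/- Define $X = \{0\} \cup \{1\} \cup \{(a, 1/n) : a \in \{0,1\}^{\mathbb{N}}, n \ge 1\}$ with the topology making $(a,1/n) \to 0$ as $n \to \infty$ when $a_0 = 0$, and $(a,1/n) \to 1$ when $a_0 = 1$. Define continuous maps $f_n$ on $X$ by $f_n((a,1/i)) = (\sigma(a), 1/(i+1))$ if $i < n$ and $f_n(x) = x$ otherwise, where $\sigma$ is the left shift. Then $h_{top}(X, \{f_n\}) \ge \log 2$. -/
open Filter MeasureTheory

/-- The standard embedding of the Cantor space `{0,1}^ℕ` into `ℝ`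
(base-3 expansion with digits 0 and 2). -/
noncomputable def cantorEmb (a : ℕ → Bool) : ℝ :=
  ∑' i : ℕ, (if a i then 2 else 0) / 3 ^ (i + 1)

/-- The space `X = {0} ∪ {1} ∪ {a × (1/n) : a ∈ Σ₂, n ≥ 1}`: `Sum.inl false`
is the point `0`, `Sum.inl true` is the point `1`, and `Sum.inr (a, m)`
is the point `a × 1/(m+1)`. -/
def XSpace : Type := Bool ⊕ ((ℕ → Bool) × ℕ)

/-- The embedding of `XSpace` into `ℝ³` realizing the required topology:
points `a × 1/n` with `a₀ = 0` converge to `0` and those with `a₀ = 1`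
converge to `1` as `n → ∞`. -/
noncomputable def iotaX : XSpace → ℝ × ℝ × ℝ
  | Sum.inl b => ((if b then 1 else 0), 0, 0)
  | Sum.inr (a, m) => ((if a 0 then 1 else 0), 1 / (m + 1), cantorEmb a / (m + 1))

/-- The metric on `XSpace`, pulled back from `ℝ³`. -/
noncomputable def distX (p q : XSpace) : ℝ := dist (iotaX p) (iotaX q)

/-- `fX n` is the map `f_{n+1}` of the paper: it sends `a × 1/i` to
`σ(a) × 1/(i+1)` when `i < n + 1` (here `i = m + 1`) and fixes all other points. -/
def fX (n : ℕ) : XSpace → XSpace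
  | Sum.inr (a, m) => if m < n then Sum.inr (fun j => a (j + 1), m + 1) else Sum.inr (a, m)
  | x => x

/-- The space `Y = {0} ∪ {a × (1/n) : a ∈ Σ₂, n ≥ 1}`: `Sum.inl ()` is the
point `0` and `Sum.inr (a, m)` is the point `a × 1/(m+1)`. -/
def YSpace : Type := Unit ⊕ ((ℕ → Bool) × ℕ)

/-- The embedding of `YSpace` into `ℝ²` realizing the required topology:
all points `a × 1/n` converge to `0` as `n → ∞`. -/
noncomputable def iotaY : YSpace → ℝ × ℝ
  | Sum.inl _ => (0, 0)
  | Sum.inr (a, m) => (1 / (m + 1), cantorEmb a / (m + 1))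

/-- The metric on `YSpace`, pulled back from `ℝ²`. -/
noncomputable def distY (p q : YSpace) : ℝ := dist (iotaY p) (iotaY q)

/-- `gY n` is the map `g_{n+1}` of the paper, the same formula as `fX n`. -/
def gY (n : ℕ) : YSpace → YSpace
  | Sum.inr (a, m) => if m < n then Sum.inr (fun j => a (j + 1), m + 1) else Sum.inr (a, m)
  | y => y


open Filter Topology

lemma summable_geo : Summable (fun i : ℕ => (2:ℝ) / 3 ^ (i+1)) := by
  have h : (fun i : ℕ => (2:ℝ) / 3 ^ (i+1)) = fun i : ℕ => (2/3) * (1/3:ℝ)^i := by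
    funext i; rw [pow_succ, one_div, inv_pow]; ring
  rw [h]
  exact (summable_geometric_of_lt_one (by norm_num) (by norm_num)).mul_left _

lemma term_le (a : ℕ → Bool) (i : ℕ) :
    ((if a i then 2 else 0):ℝ) / 3 ^ (i+1) ≤ (2:ℝ) / 3 ^ (i+1) :=
  div_le_div_of_nonneg_right (by split <;> norm_num) (by positivity)

lemma cantorEmb_summable (a : ℕ → Bool) :
    Summable (fun i : ℕ => ((if a i then 2 else 0):ℝ) / 3 ^ (i+1)) :=
  Summable.of_nonneg_of_le (fun i => by positivity) (term_le a) summable_geo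

lemma cantorEmb_nonneg (a : ℕ → Bool) : 0 ≤ cantorEmb a :=
  tsum_nonneg (fun i => by positivity)

lemma cantorEmb_le_one (a : ℕ → Bool) : cantorEmb a ≤ 1 := by
  have h1 : cantorEmb a ≤ ∑' i : ℕ, (2:ℝ) / 3 ^ (i+1) :=
    Summable.tsum_le_tsum (term_le a) (cantorEmb_summable a) summable_geo
  have h2 : ∑' i : ℕ, (2:ℝ) / 3 ^ (i+1) = 1 := by
    have h : (fun i : ℕ => (2:ℝ) / 3 ^ (i+1)) = fun i : ℕ => (2/3) * (1/3:ℝ)^i := by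
      funext i; rw [pow_succ, one_div, inv_pow]; ring
    rw [h, tsum_mul_left, tsum_geometric_of_lt_one (by norm_num) (by norm_num)]
    norm_num
  linarith

lemma norm_iotaX_le (x : XSpace) : ‖iotaX x‖ ≤ 1 := by
  have hcb : ∀ (a : ℕ → Bool) (m : ℕ), |cantorEmb a / ((m:ℝ) + 1)| ≤ 1 := by
    intro a m
    rw [abs_div, abs_of_nonneg (cantorEmb_nonneg a), abs_of_pos (by positivity)]
    rw [div_le_one (by positivity)]
    have h0 : (0:ℝ) ≤ m := Nat.cast_nonneg m
    linarith [cantorEmb_le_one a]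
  have hinv : ∀ m : ℕ, |1 / ((m:ℝ) + 1)| ≤ 1 := by
    intro m
    rw [abs_of_pos (by positivity), div_le_one (by positivity)]
    have : (0:ℝ) ≤ m := Nat.cast_nonneg m
    linarith
  cases x with
  | inl b =>
      simp only [iotaX, Prod.norm_def, Real.norm_eq_abs]
      apply max_le (by split <;> norm_num) (by norm_num)
  | inr p =>
      obtain ⟨a, m⟩ := p
      simp only [iotaX, Prod.norm_def, Real.norm_eq_abs]
      apply max_le (by split <;> norm_num)
      exact max_le (hinv m) (hcb a m)

lemma compSeq_fX (a : ℕ → Bool) (k : ℕ) :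
    compSeq fX (k + 1) (Sum.inr (a, 0)) = Sum.inr (fun l => a (l + k), k) := by
  induction k with
  | zero => simp [compSeq, fX]; rfl
  | succ k ih =>
      show fX (k+1) (compSeq fX (k+1) (Sum.inr (a,0))) = _
      rw [ih]
      simp only [fX, if_pos (Nat.lt_succ_self k)]
      refine (if_pos (Nat.lt_succ_self k)).trans ?_
      congr 1
      refine Prod.ext ?_ rfl
      funext j
      simp only
      congr 1
      omega

/-- The orbit map into `(ℝ³)ⁿ`. -/
noncomputable def PhiX (n : ℕ) (x : XSpace) : Fin n → ℝ × ℝ × ℝ :=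
  fun j => iotaX (compSeq fX j x)

lemma norm_PhiX_le (n : ℕ) (x : XSpace) : ‖PhiX n x‖ ≤ 1 := by
  apply pi_norm_le_iff_of_nonneg (by norm_num) |>.mpr
  intro j; exact norm_iotaX_le _

lemma sep_bddAbove (n : ℕ) :
    BddAbove {c | ∃ E : Finset XSpace,
      IsSeparatedSet distX fX n (1/2) ↑E ∧ E.card = c} := by
  obtain ⟨t, htfin, htcover⟩ := Metric.totallyBounded_iff.mp
    (isCompact_closedBall (0 : Fin n → ℝ × ℝ × ℝ) 1).totallyBounded (1/4) (by norm_num)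
  have hmem : ∀ x : XSpace, ∃ y ∈ t, PhiX n x ∈ Metric.ball y (1/4) := by
    intro x
    have : PhiX n x ∈ Metric.closedBall (0 : Fin n → ℝ × ℝ × ℝ) 1 :=
      Metric.mem_closedBall.mpr (by simpa using norm_PhiX_le n x)
    simpa using htcover this
  choose g hg1 hg2 using hmem
  refine ⟨htfin.toFinset.card, ?_⟩
  rintro c ⟨E, hsep, rfl⟩
  apply Finset.card_le_card_of_injOn g (fun x _ => htfin.mem_toFinset.mpr (hg1 x))
  intro x hx y hy hgxy
  by_contra hne
  obtain ⟨j, hj, hd⟩ := hsep x hx y hy hne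
  have h1 : distX (compSeq fX j x) (compSeq fX j y)
      = dist (PhiX n x ⟨j, hj⟩) (PhiX n y ⟨j, hj⟩) := rfl
  have h2 : dist (PhiX n x ⟨j, hj⟩) (PhiX n y ⟨j, hj⟩) ≤ dist (PhiX n x) (PhiX n y) :=
    dist_le_pi_dist _ _ _
  have h3 : dist (PhiX n x) (PhiX n y) < 1/2 := by
    have hx4 := Metric.mem_ball.mp (hg2 x)
    have hy4 := Metric.mem_ball.mp (hg2 y)
    calc dist (PhiX n x) (PhiX n y) ≤ dist (PhiX n x) (g x) + dist (g x) (PhiX n y) :=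
          dist_triangle _ _ _
      _ < 1/4 + 1/4 := by
          rw [hgxy] at *
          exact add_lt_add hx4 (by rw [dist_comm]; exact hy4)
      _ = 1/2 := by norm_num
  rw [h1] at hd; linarith

lemma sep_lower (k : ℕ) : 2 ^ k ≤ sepNum distX fX (k + 1) (1/2) := by
  classical
  set ext : (Fin k → Bool) → ℕ → Bool := fun s i => if h : i < k then s ⟨i, h⟩ else false
  set emb : (Fin k → Bool) → XSpace := fun s => Sum.inr (ext s, 0) with hemb
  have hinj : Function.Injective emb := by
    intro s t h
    have hext : ext s = ext t := by
      have h2 := h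
      simp only [hemb] at h2
      injection h2 with h3
      injection h3
    funext i
    have := congrFun hext i
    simpa [ext, i.isLt] using this
  set E : Finset XSpace := Finset.image emb Finset.univ with hE
  have hcard : E.card = 2 ^ k := by
    rw [hE, Finset.card_image_of_injective _ hinj, Finset.card_univ]
    simp
  have hsep : IsSeparatedSet distX fX (k + 1) (1/2) ↑E := by
    intro x hx y hy hxy
    simp only [hE, Finset.coe_image, Set.mem_image, Finset.coe_univ, Set.mem_univ,
      true_and] at hx hy
    obtain ⟨s, rfl⟩ := hx
    obtain ⟨t, rfl⟩ := hy
    have hst : s ≠ t := fun h => hxy (by rw [h])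
    obtain ⟨i, hi⟩ := Function.ne_iff.mp hst
    refine ⟨i + 1, by omega, ?_⟩
    have hs := compSeq_fX (ext s) i
    have ht := compSeq_fX (ext t) i
    simp only [hemb] at hs ht ⊢
    rw [hs, ht]
    have hne : ext s (0 + i) ≠ ext t (0 + i) := by
      simp only [ext, zero_add, dif_pos i.isLt]
      simpa using hi
    have h1 : (1:ℝ) ≤ distX (Sum.inr (fun l => ext s (l + i), i))
        (Sum.inr (fun l => ext t (l + i), i)) := by
      have : distX (Sum.inr (fun l => ext s (l + i), i))
          (Sum.inr (fun l => ext t (l + i), i))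
          ≥ dist ((if ext s (0 + i) then (1:ℝ) else 0)) ((if ext t (0 + i) then (1:ℝ) else 0)) := by
        unfold distX; rw [Prod.dist_eq]
        exact le_max_left _ _
      simp only [zero_add] at this hne
      have hd : dist ((if ext s (i:ℕ) then (1:ℝ) else 0))
          ((if ext t (i:ℕ) then (1:ℝ) else 0)) = 1 := by
        rcases Bool.eq_false_or_eq_true (ext s (i:ℕ)) with h | h <;>
          rcases Bool.eq_false_or_eq_true (ext t (i:ℕ)) with h' | h' <;>
          simp [h, h', Real.dist_eq] at hne ⊢
      linarith
    linarith
  exact le_csSup (sep_bddAbove (k + 1)) ⟨E, hsep, hcard⟩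

theorem entropy_X_ge_log_two :
    ((Real.log 2 : ℝ) : EReal) ≤ nadsEntropy distX fX := by
  have key : ∀ k : ℕ, ((k:ℝ) / ((k:ℝ) + 1) * Real.log 2)
      ≤ Real.log (sepNum distX fX (k + 1) (1/2)) / ((k:ℝ) + 1) := by
    intro k
    have h1 : (2:ℝ) ^ k ≤ (sepNum distX fX (k + 1) (1/2) : ℝ) := by
      exact_mod_cast sep_lower k
    have h2 : (k:ℝ) * Real.log 2 ≤ Real.log (sepNum distX fX (k + 1) (1/2)) := by
      have := Real.log_le_log (by positivity) h1
      rwa [Real.log_pow] at this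
    rw [div_mul_eq_mul_div]
    exact div_le_div_of_nonneg_right h2 (by positivity)
  set a : ℕ → EReal :=
    fun n : ℕ => ((Real.log (sepNum distX fX n (1/2)) / n : ℝ) : EReal) with ha
  set b : ℕ → EReal :=
    fun n : ℕ => ((((n:ℝ) - 1) / (n:ℝ) * Real.log 2 : ℝ) : EReal) with hb
  have hev : ∀ᶠ n in atTop, b n ≤ a n := by
    filter_upwards [eventually_ge_atTop 1] with n hn
    obtain ⟨k, rfl⟩ : ∃ k, n = k + 1 := ⟨n - 1, by omega⟩
    rw [ha, hb]
    apply EReal.coe_le_coe_iff.mpr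
    push_cast
    rw [show ((k:ℝ) + 1 - 1) = (k:ℝ) by ring]
    exact key k
  have htend : Tendsto b atTop (𝓝 ((Real.log 2 : ℝ) : EReal)) := by
    rw [hb]
    apply EReal.tendsto_coe.mpr
    have h1 : Tendsto (fun n : ℕ => 1 - 1 / (n:ℝ)) atTop (𝓝 1) := by
      have := (tendsto_const_nhds (x := (1:ℝ)) (f := atTop)).sub
        tendsto_one_div_atTop_nhds_zero_nat
      simpa using this
    have h2 : (fun n : ℕ => ((n:ℝ) - 1) / (n:ℝ)) =ᶠ[atTop] fun n : ℕ => 1 - 1 / (n:ℝ) := by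
      filter_upwards [eventually_ge_atTop 1] with n hn
      have : (0:ℝ) < n := by exact_mod_cast hn
      field_simp
    have h3 : Tendsto (fun n : ℕ => ((n:ℝ) - 1) / (n:ℝ)) atTop (𝓝 1) := h1.congr' h2.symm
    have := h3.mul_const (Real.log 2)
    simpa using this
  have hlim : atTop.limsup b = ((Real.log 2 : ℝ) : EReal) := htend.limsup_eq
  have hle : atTop.limsup b ≤ atTop.limsup a := limsup_le_limsup hev
  rw [hlim] at hle
  calc ((Real.log 2 : ℝ) : EReal) ≤ atTop.limsup a := hle
    _ ≤ nadsEntropy distX fX := by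
        rw [nadsEntropy]
        exact le_iSup_of_le (1/2 : ℝ) (le_iSup_of_le (by norm_num) le_rfl)
end
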